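/- The Frobenius module P is a compact projective generator of the category Frob_R: the hom functor Hom_{Frob_R}(P, −) : Frob_R → Type preserves sifted colimits and reflects isomorphisms. -/

import Mathlib

/-!
STATEMENT 4: For a commutative ring `R` of prime characteristic `p`, the Frobenius
module `P = ⨁_{n ∈ ℕ} R` (with `κ_P (r · eₙ) = r ^ p · e_{n+1}`) is a compact
projective generator of `Frob_R`: the hom functor `Hom_{Frob_R}(P, −) : Frob_R → Type`
preserves sifted colimits and reflects isomorphisms.
-/

open CategoryTheory

set_option linter.unusedSectionVars false

universe u

variable (p : ℕ) (R : Type u) [CommRing R] [Fact p.Prime] [CharP R p]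

/-- A Frobenius module over `R`: an `R`-module `M` together with an additive map
`κ : M → M` that is semilinear along the Frobenius, i.e. `κ (r • m) = r ^ p • κ m`. -/
structure FrobModule where
  /-- the underlying type -/
  carrier : Type u
  [isAddCommGroup : AddCommGroup carrier]
  [isModule : Module R carrier]
  /-- the Frobenius-semilinear structure map -/
  κ : carrier →+ carrier
  κ_smul : ∀ (r : R) (m : carrier), κ (r • m) = r ^ p • κ m

attribute [instance] FrobModule.isAddCommGroup FrobModule.isModule

namespace FrobModule

variable {p R}

/-- Morphisms of Frobenius modules: `R`-linear maps commuting with the structure maps. -/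
@[ext]
structure Hom (M N : FrobModule p R) where
  /-- the underlying `R`-linear map -/
  toLinearMap : M.carrier →ₗ[R] N.carrier
  comm : ∀ m, toLinearMap (M.κ m) = N.κ (toLinearMap m)

instance : Category (FrobModule p R) where
  Hom M N := Hom M N
  id M := ⟨LinearMap.id, fun _ => rfl⟩
  comp f g := ⟨g.toLinearMap.comp f.toLinearMap, fun m => by
    simp only [LinearMap.comp_apply, f.comm, g.comm]⟩
  id_comp f := by apply Hom.ext; rfl
  comp_id f := by apply Hom.ext; rfl
  assoc f g h := by apply Hom.ext; rfl

end FrobModule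

/-- The structure map of the Frobenius module `P`, determined by
`r · eₙ ↦ r ^ p · e_{n+1}`. -/
noncomputable def Pκ : (ℕ →₀ R) →+ (ℕ →₀ R) where
  toFun m := Finsupp.mapDomain Nat.succ
    (Finsupp.mapRange (frobenius R p) (map_zero _) m)
  map_zero' := by simp
  map_add' a b := by
    show Finsupp.mapDomain Nat.succ _ = _
    rw [Finsupp.mapRange_add (fun x y => map_add _ x y), Finsupp.mapDomain_add]

/-- The Frobenius module `P` with underlying module `⨁_{n ∈ ℕ} R` and structure map
`κ_P (r · eₙ) = r ^ p · e_{n+1}`. -/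
noncomputable def P : FrobModule p R where
  carrier := ℕ →₀ R
  κ := Pκ p R
  κ_smul r m := by
    have h1 : Finsupp.mapRange (frobenius R p) (map_zero _) (r • m)
        = r ^ p • Finsupp.mapRange (frobenius R p) (map_zero _) m := by
      ext n
      simp [Finsupp.mapRange_apply, frobenius_def, mul_pow]
    show Finsupp.mapDomain Nat.succ _ = r ^ p • Finsupp.mapDomain Nat.succ _
    rw [h1, Finsupp.mapDomain_smul]

namespace FrobModule

open Limits

variable {p R}

/-- Iterates of the structure map as additive maps. -/
def κiter (M : FrobModule p R) : ℕ → (M.carrier →+ M.carrier)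
  | 0 => AddMonoidHom.id _
  | n + 1 => M.κ.comp (M.κiter n)

lemma κiter_succ (M : FrobModule p R) (n : ℕ) (x : M.carrier) :
    M.κiter (n + 1) x = M.κ (M.κiter n x) := rfl

lemma hom_κiter {M N : FrobModule p R} (f : M ⟶ N) (n : ℕ) (x : M.carrier) :
    f.toLinearMap (M.κiter n x) = N.κiter n (f.toLinearMap x) := by
  induction n with
  | zero => rfl
  | succ n ih => rw [κiter_succ, f.comm, ih, κiter_succ]

lemma Pκ_single (n : ℕ) (r : R) :
    Pκ p R (Finsupp.single n r) = Finsupp.single (n + 1) (r ^ p) := by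
  show Finsupp.mapDomain Nat.succ
      (Finsupp.mapRange (frobenius R p) (map_zero _) (Finsupp.single n r)) = _
  rw [Finsupp.mapRange_single, Finsupp.mapDomain_single]
  rfl

lemma ofElt_aux (M : FrobModule p R) (x : M.carrier) (m : ℕ →₀ R) :
    Finsupp.linearCombination R (fun k => M.κiter k x) (Pκ p R m)
      = M.κ (Finsupp.linearCombination R (fun k => M.κiter k x) m) := by
  induction m using Finsupp.induction with
  | zero => simp
  | single_add n r m _ _ ih =>
    rw [map_add, map_add, map_add, map_add, ih]
    congr 1
    rw [Pκ_single, Finsupp.linearCombination_single,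
      Finsupp.linearCombination_single, M.κ_smul, κiter_succ]

/-- The morphism `P ⟶ M` determined by an element `x` of `M`. -/
noncomputable def ofElt (M : FrobModule p R) (x : M.carrier) : P p R ⟶ M where
  toLinearMap := Finsupp.linearCombination R (fun n => M.κiter n x)
  comm m := ofElt_aux M x m

lemma ofElt_e₀ (M : FrobModule p R) (x : M.carrier) :
    (ofElt M x).toLinearMap (Finsupp.single 0 1) = x := by
  show Finsupp.linearCombination R (fun k => M.κiter k x) (Finsupp.single 0 1) = x
  rw [Finsupp.linearCombination_single]
  show (1:R) • x = x
  rw [one_smul]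

lemma eq_ofElt {M : FrobModule p R} (f : P p R ⟶ M) :
    f = ofElt M (f.toLinearMap (Finsupp.single 0 1)) := by
  have key : ∀ n : ℕ, f.toLinearMap (Finsupp.single n 1)
      = M.κiter n (f.toLinearMap (Finsupp.single 0 1)) := by
    intro n
    induction n with
    | zero => rfl
    | succ n ih =>
      have h1 : (Finsupp.single (n+1) (1:R)) = (P p R).κ (Finsupp.single n 1) := by
        show _ = Pκ p R (Finsupp.single n 1)
        rw [Pκ_single, one_pow]
      rw [h1]
      exact (f.comm _).trans (by rw [ih, κiter_succ])
  apply Hom.ext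
  apply Finsupp.lhom_ext
  intro n r
  have h2 : (Finsupp.single n r) = r • (Finsupp.single n (1:R)) := by
    rw [Finsupp.smul_single, smul_eq_mul, mul_one]
  show f.toLinearMap (Finsupp.single n r)
      = Finsupp.linearCombination R
          (fun k => M.κiter k (f.toLinearMap (Finsupp.single 0 1))) (Finsupp.single n r)
  rw [h2]
  erw [map_smul, map_smul]
  rw [key, Finsupp.linearCombination_single, one_smul]

lemma ofElt_comp {M N : FrobModule p R} (g : M ⟶ N) (x : M.carrier) :
    ofElt M x ≫ g = ofElt N (g.toLinearMap x) := by
  apply Hom.ext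
  apply Finsupp.lhom_ext
  intro n r
  show g.toLinearMap
      (Finsupp.linearCombination R (fun k => M.κiter k x) (Finsupp.single n r))
    = Finsupp.linearCombination R (fun k => N.κiter k (g.toLinearMap x)) (Finsupp.single n r)
  rw [Finsupp.linearCombination_single, Finsupp.linearCombination_single,
    map_smul, hom_κiter]


/-- The forgetful functor from Frobenius modules to types. -/
def forgetF : FrobModule p R ⥤ Type u where
  obj M := M.carrier
  map f := ↾f.toLinearMap
  map_id _ := rfl
  map_comp _ _ := rfl

variable (p R) in
/-- The hom functor of `P` is naturally isomorphic to the forgetful functor. -/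
noncomputable def εIso : (forgetF : FrobModule p R ⥤ Type u)
    ≅ coyoneda.obj (Opposite.op (P p R)) :=
  NatIso.ofComponents
    (fun M =>
      { hom := ↾fun x => ofElt M x
        inv := ↾fun f => f.toLinearMap (Finsupp.single 0 1)
        hom_inv_id := TypeCat.homEquiv.injective (funext fun x => ofElt_e₀ M x)
        inv_hom_id := TypeCat.homEquiv.injective (funext fun f => (eq_ofElt f).symm) })
    (fun {M N} g => TypeCat.homEquiv.injective (funext fun x => (ofElt_comp g x).symm))

section Colimits

open Limits

variable {J : Type u} [SmallCategory J] [IsSifted J] (F : J ⥤ FrobModule p R)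

lemma Fmap_comp {j k l : J} (f : j ⟶ k) (g : k ⟶ l) (a : (F.obj j).carrier) :
    (F.map (f ≫ g)).toLinearMap a = (F.map g).toLinearMap ((F.map f).toLinearMap a) := by
  rw [F.map_comp]; rfl

lemma Fmap_id {j : J} (a : (F.obj j).carrier) :
    (F.map (𝟙 j)).toLinearMap a = a := by
  rw [F.map_id]; rfl

lemma ι_push {j l : J} (f : j ⟶ l) (a : (F.obj j).carrier) :
    colimit.ι (F ⋙ forgetF) j a = colimit.ι (F ⋙ forgetF) l ((F.map f).toLinearMap a) :=
  (ConcreteCategory.congr_hom (colimit.w (F ⋙ forgetF) f) a).symm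

/-- The value of the "addition at a cospan". -/
noncomputable def mixVal (j k : J) (a : (F.obj j).carrier) (b : (F.obj k).carrier)
    (s : StructuredArrow (⟨j, k⟩ : J × J) (Functor.diag J)) : colimit (F ⋙ forgetF) :=
  colimit.ι (F ⋙ forgetF) s.right
    ((F.map (show j ⟶ s.right from s.hom.1)).toLinearMap a
      + (F.map (show k ⟶ s.right from s.hom.2)).toLinearMap b)

lemma mixVal_const (j k : J) (a : (F.obj j).carrier) (b : (F.obj k).carrier)
    (s s' : StructuredArrow (⟨j, k⟩ : J × J) (Functor.diag J)) :
    mixVal F j k a b s = mixVal F j k a b s' := by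
  apply constant_of_preserves_morphisms (fun s => mixVal F j k a b s)
  intro s₁ s₂ φ
  have h1 : s₁.hom.1 ≫ φ.right = s₂.hom.1 := congrArg Prod.fst (StructuredArrow.w φ)
  have h2 : s₁.hom.2 ≫ φ.right = s₂.hom.2 := congrArg Prod.snd (StructuredArrow.w φ)
  unfold mixVal
  rw [ι_push F φ.right]
  refine TypeCat.congr_arg (colimit.ι (F ⋙ forgetF) s₂.right) ?_
  rw [map_add, ← Fmap_comp, ← Fmap_comp, h1, h2]

/-- Addition of elements sitting at two different indices. -/
noncomputable def mix (j k : J) (a : (F.obj j).carrier) (b : (F.obj k).carrier) :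
    colimit (F ⋙ forgetF) :=
  mixVal F j k a b (Classical.arbitrary _)

lemma mix_spec (j k : J) (a : (F.obj j).carrier) (b : (F.obj k).carrier)
    (s : StructuredArrow (⟨j, k⟩ : J × J) (Functor.diag J)) :
    mix F j k a b = mixVal F j k a b s :=
  mixVal_const F j k a b _ s

lemma mix_self (j : J) (a b : (F.obj j).carrier) :
    mix F j j a b = colimit.ι (F ⋙ forgetF) j (a + b) := by
  rw [mix_spec F j j a b
    (StructuredArrow.mk (⟨𝟙 j, 𝟙 j⟩ : (⟨j, j⟩ : J × J) ⟶ (Functor.diag J).obj j))]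
  unfold mixVal
  simp only [StructuredArrow.mk_right, StructuredArrow.mk_hom_eq_self]
  rw [Fmap_id, Fmap_id]

lemma mix_left_step {j j' : J} (w : j ⟶ j') (k : J) (a : (F.obj j).carrier)
    (b : (F.obj k).carrier) :
    mix F j k a b = mix F j' k ((F.map w).toLinearMap a) b := by
  set s' := Classical.arbitrary (StructuredArrow (⟨j', k⟩ : J × J) (Functor.diag J)) with hs'
  have h0 : mix F j' k ((F.map w).toLinearMap a) b
      = mixVal F j' k ((F.map w).toLinearMap a) b s' := rfl
  rw [h0, mix_spec F j k a b
    (StructuredArrow.mk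
      (⟨w ≫ s'.hom.1, s'.hom.2⟩ : (⟨j, k⟩ : J × J) ⟶ (Functor.diag J).obj s'.right))]
  unfold mixVal
  simp only [StructuredArrow.mk_right, StructuredArrow.mk_hom_eq_self]
  rw [Fmap_comp]

lemma mix_comm (j k : J) (a : (F.obj j).carrier) (b : (F.obj k).carrier) :
    mix F j k a b = mix F k j b a := by
  set s := Classical.arbitrary (StructuredArrow (⟨k, j⟩ : J × J) (Functor.diag J)) with hs
  have h0 : mix F k j b a = mixVal F k j b a s := rfl
  rw [h0, mix_spec F j k a b
    (StructuredArrow.mk (⟨s.hom.2, s.hom.1⟩ : (⟨j, k⟩ : J × J) ⟶ (Functor.diag J).obj s.right))]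
  unfold mixVal
  simp only [StructuredArrow.mk_right, StructuredArrow.mk_hom_eq_self]
  rw [add_comm]

lemma mix_left {j j' k : J} {a : (F.obj j).carrier} {a' : (F.obj j').carrier}
    (h : colimit.ι (F ⋙ forgetF) j a = colimit.ι (F ⋙ forgetF) j' a') (b : (F.obj k).carrier) :
    mix F j k a b = mix F j' k a' b := by
  have h' := Types.colimit_eq h
  suffices H : ∀ x y : Σ i, (F ⋙ forgetF).obj i,
      Relation.EqvGen (F ⋙ forgetF).ColimitTypeRel x y →
      mix F x.1 k x.2 b = mix F y.1 k y.2 b from H ⟨j, a⟩ ⟨j', a'⟩ h'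
  intro x y hxy
  induction hxy with
  | rel x y h =>
    obtain ⟨f, hf⟩ := h
    rw [hf]
    exact mix_left_step F f k x.2 b
  | refl => rfl
  | symm _ _ _ ih => exact ih.symm
  | trans _ _ _ _ _ ih1 ih2 => exact ih1.trans ih2

lemma mix_right {j k k' : J} (a : (F.obj j).carrier) {b : (F.obj k).carrier}
    {b' : (F.obj k').carrier}
    (h : colimit.ι (F ⋙ forgetF) k b = colimit.ι (F ⋙ forgetF) k' b') :
    mix F j k a b = mix F j k' a b' := by
  rw [mix_comm, mix_left F h a, mix_comm]

lemma exists_rep (x : colimit (F ⋙ forgetF)) :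
    ∃ (j : J) (a : (F.obj j).carrier), colimit.ι (F ⋙ forgetF) j a = x :=
  Types.jointly_surjective' x

lemma exists_rep₂ (x y : colimit (F ⋙ forgetF)) :
    ∃ (j : J) (a b : (F.obj j).carrier),
      colimit.ι (F ⋙ forgetF) j a = x ∧ colimit.ι (F ⋙ forgetF) j b = y := by
  obtain ⟨j, a, rfl⟩ := exists_rep F x
  obtain ⟨k, b, rfl⟩ := exists_rep F y
  have s := Classical.arbitrary (StructuredArrow (⟨j, k⟩ : J × J) (Functor.diag J))
  exact ⟨s.right, (F.map s.hom.1).toLinearMap a, (F.map s.hom.2).toLinearMap b,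
    (ι_push F s.hom.1 a).symm, (ι_push F s.hom.2 b).symm⟩

lemma exists_rep₃ (x y z : colimit (F ⋙ forgetF)) :
    ∃ (j : J) (a b c : (F.obj j).carrier), colimit.ι (F ⋙ forgetF) j a = x ∧
      colimit.ι (F ⋙ forgetF) j b = y ∧ colimit.ι (F ⋙ forgetF) j c = z := by
  obtain ⟨j, a, b, rfl, rfl⟩ := exists_rep₂ F x y
  obtain ⟨k, c, rfl⟩ := exists_rep F z
  have s := Classical.arbitrary (StructuredArrow (⟨j, k⟩ : J × J) (Functor.diag J))
  exact ⟨s.right, (F.map s.hom.1).toLinearMap a, (F.map s.hom.1).toLinearMap b,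
    (F.map s.hom.2).toLinearMap c,
    (ι_push F s.hom.1 a).symm, (ι_push F s.hom.1 b).symm, (ι_push F s.hom.2 c).symm⟩

/-- Addition on the colimit. -/
noncomputable def Tadd (x y : colimit (F ⋙ forgetF)) : colimit (F ⋙ forgetF) :=
  mix F (exists_rep F x).choose (exists_rep F y).choose
    (exists_rep F x).choose_spec.choose (exists_rep F y).choose_spec.choose

lemma Tadd_eq (j k : J) (a : (F.obj j).carrier) (b : (F.obj k).carrier) :
    Tadd F (colimit.ι (F ⋙ forgetF) j a) (colimit.ι (F ⋙ forgetF) k b) = mix F j k a b := by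
  unfold Tadd
  exact (mix_left F
      ((exists_rep F (colimit.ι (F ⋙ forgetF) j a)).choose_spec.choose_spec.trans rfl) _).trans
    (mix_right F _
      ((exists_rep F (colimit.ι (F ⋙ forgetF) k b)).choose_spec.choose_spec.trans rfl))

lemma Tadd_ι (j : J) (a b : (F.obj j).carrier) :
    Tadd F (colimit.ι (F ⋙ forgetF) j a) (colimit.ι (F ⋙ forgetF) j b)
      = colimit.ι (F ⋙ forgetF) j (a + b) :=
  (Tadd_eq F j j a b).trans (mix_self F j a b)

/-- Negation as a natural transformation. -/
def negTrans : (F ⋙ forgetF : J ⥤ Type u) ⟶ (F ⋙ forgetF : J ⥤ Type u) where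
  app j := ↾fun (x : (F.obj j).carrier) => (-x : (F.obj j).carrier)
  naturality j k f := TypeCat.homEquiv.injective (funext fun a => ((F.map f).toLinearMap.map_neg a).symm)

/-- Negation on the colimit. -/
noncomputable def Tneg : colimit (F ⋙ forgetF) ⟶ colimit (F ⋙ forgetF) :=
  colimMap (negTrans F)

lemma Tneg_ι (j : J) (a : (F.obj j).carrier) :
    Tneg F (colimit.ι (F ⋙ forgetF) j a) = colimit.ι (F ⋙ forgetF) j (-a) :=
  ConcreteCategory.congr_hom (ι_colimMap (negTrans F) j) a

/-- Scalar multiplication as a natural transformation. -/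
def smulTrans (r : R) : (F ⋙ forgetF : J ⥤ Type u) ⟶ (F ⋙ forgetF : J ⥤ Type u) where
  app j := ↾fun (x : (F.obj j).carrier) => (r • x : (F.obj j).carrier)
  naturality j k f := TypeCat.homEquiv.injective (funext fun a => ((F.map f).toLinearMap.map_smul r a).symm)

/-- Scalar multiplication on the colimit. -/
noncomputable def Tsmul (r : R) : colimit (F ⋙ forgetF) ⟶ colimit (F ⋙ forgetF) :=
  colimMap (smulTrans F r)

lemma Tsmul_ι (r : R) (j : J) (a : (F.obj j).carrier) :
    Tsmul F r (colimit.ι (F ⋙ forgetF) j a) = colimit.ι (F ⋙ forgetF) j (r • a) :=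
  ConcreteCategory.congr_hom (ι_colimMap (smulTrans F r) j) a

/-- The Frobenius structure as a natural transformation. -/
def κTrans : (F ⋙ forgetF : J ⥤ Type u) ⟶ (F ⋙ forgetF : J ⥤ Type u) where
  app j := ↾fun (x : (F.obj j).carrier) => (F.obj j).κ x
  naturality j k f := TypeCat.homEquiv.injective (funext fun a => ((F.map f).comm a).symm)

/-- The Frobenius structure map on the colimit. -/
noncomputable def Tκfun : colimit (F ⋙ forgetF) ⟶ colimit (F ⋙ forgetF) :=
  colimMap (κTrans F)

lemma Tκ_ι (j : J) (a : (F.obj j).carrier) :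
    Tκfun F (colimit.ι (F ⋙ forgetF) j a) = colimit.ι (F ⋙ forgetF) j ((F.obj j).κ a) :=
  ConcreteCategory.congr_hom (ι_colimMap (κTrans F) j) a

lemma ι_zero_eq (j k : J) :
    colimit.ι (F ⋙ forgetF) j (0 : (F.obj j).carrier)
      = colimit.ι (F ⋙ forgetF) k (0 : (F.obj k).carrier) := by
  apply constant_of_preserves_morphisms
    (fun j => colimit.ι (F ⋙ forgetF) j (0 : (F.obj j).carrier))
  intro j₁ j₂ f
  rw [ι_push F f]
  exact TypeCat.congr_arg (colimit.ι (F ⋙ forgetF) j₂) ((F.map f).toLinearMap.map_zero)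

noncomputable instance colZero : Zero (colimit (F ⋙ forgetF)) :=
  ⟨colimit.ι (F ⋙ forgetF) (Classical.arbitrary J)
    (0 : (F.obj (Classical.arbitrary J)).carrier)⟩

noncomputable instance colAdd : Add (colimit (F ⋙ forgetF)) := ⟨Tadd F⟩

noncomputable instance colNeg : Neg (colimit (F ⋙ forgetF)) := ⟨Tneg F⟩

set_option maxHeartbeats 1000000 in
noncomputable instance colAddCommGroup : AddCommGroup (colimit (F ⋙ forgetF)) where
  add := Tadd F
  zero := colimit.ι (F ⋙ forgetF) (Classical.arbitrary J)
    (0 : (F.obj (Classical.arbitrary J)).carrier)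
  neg := Tneg F
  add_assoc x y z := by
    obtain ⟨j, a, b, c, rfl, rfl, rfl⟩ := exists_rep₃ F x y z
    show Tadd F (Tadd F _ _) _ = Tadd F _ (Tadd F _ _)
    rw [Tadd_ι, Tadd_ι, Tadd_ι, Tadd_ι, add_assoc]
  zero_add x := by
    obtain ⟨j, a, rfl⟩ := exists_rep F x
    show Tadd F (colimit.ι (F ⋙ forgetF) (Classical.arbitrary J)
      (0 : (F.obj (Classical.arbitrary J)).carrier)) _ = _
    rw [ι_zero_eq F (Classical.arbitrary J) j, Tadd_ι, zero_add]
  add_zero x := by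
    obtain ⟨j, a, rfl⟩ := exists_rep F x
    show Tadd F _ (colimit.ι (F ⋙ forgetF) (Classical.arbitrary J)
      (0 : (F.obj (Classical.arbitrary J)).carrier)) = _
    rw [ι_zero_eq F (Classical.arbitrary J) j, Tadd_ι, add_zero]
  neg_add_cancel x := by
    obtain ⟨j, a, rfl⟩ := exists_rep F x
    show Tadd F (Tneg F _) _ = colimit.ι (F ⋙ forgetF) (Classical.arbitrary J)
      (0 : (F.obj (Classical.arbitrary J)).carrier)
    rw [Tneg_ι, Tadd_ι, neg_add_cancel, ι_zero_eq F j (Classical.arbitrary J)]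
  add_comm x y := by
    obtain ⟨j, a, b, rfl, rfl⟩ := exists_rep₂ F x y
    show Tadd F _ _ = Tadd F _ _
    rw [Tadd_ι, Tadd_ι, add_comm]
  nsmul := nsmulRec
  nsmul_zero _ := rfl
  nsmul_succ _ _ := rfl
  zsmul := zsmulRec
  zsmul_zero' _ := rfl
  zsmul_succ' _ _ := rfl
  zsmul_neg' _ _ := rfl

lemma ι_add (j : J) (a b : (F.obj j).carrier) :
    colimit.ι (F ⋙ forgetF) j a + colimit.ι (F ⋙ forgetF) j b
      = colimit.ι (F ⋙ forgetF) j (a + b) :=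
  Tadd_ι F j a b

lemma ι_zero (j : J) :
    colimit.ι (F ⋙ forgetF) j (0 : (F.obj j).carrier) = (0 : colimit (F ⋙ forgetF)) :=
  ι_zero_eq F j (Classical.arbitrary J)

noncomputable instance colModule : Module R (colimit (F ⋙ forgetF)) where
  smul r := Tsmul F r
  one_smul x := by
    obtain ⟨j, a, rfl⟩ := exists_rep F x
    show Tsmul F 1 _ = _
    rw [Tsmul_ι, one_smul]
  mul_smul r s x := by
    obtain ⟨j, a, rfl⟩ := exists_rep F x
    show Tsmul F (r * s) _ = Tsmul F r (Tsmul F s _)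
    rw [Tsmul_ι, Tsmul_ι, Tsmul_ι, mul_smul]
  smul_zero r := by
    show Tsmul F r (0 : colimit (F ⋙ forgetF)) = (0 : colimit (F ⋙ forgetF))
    rw [← ι_zero F (Classical.arbitrary J), Tsmul_ι, smul_zero]
  smul_add r x y := by
    obtain ⟨j, a, b, rfl, rfl⟩ := exists_rep₂ F x y
    show Tsmul F r (Tadd F _ _) = Tadd F (Tsmul F r _) (Tsmul F r _)
    rw [Tadd_ι, Tsmul_ι, Tsmul_ι, Tsmul_ι, Tadd_ι, smul_add]
  add_smul r s x := by
    obtain ⟨j, a, rfl⟩ := exists_rep F x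
    show Tsmul F (r + s) _ = Tadd F (Tsmul F r _) (Tsmul F s _)
    rw [Tsmul_ι, Tsmul_ι, Tsmul_ι, Tadd_ι, add_smul]
  zero_smul x := by
    obtain ⟨j, a, rfl⟩ := exists_rep F x
    show Tsmul F 0 _ = _
    rw [Tsmul_ι, zero_smul, ι_zero]

lemma ι_smul (r : R) (j : J) (a : (F.obj j).carrier) :
    r • colimit.ι (F ⋙ forgetF) j a = colimit.ι (F ⋙ forgetF) j (r • a) :=
  Tsmul_ι F r j a

/-- The colimit Frobenius module. -/
noncomputable def colPt : FrobModule p R where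
  carrier := colimit (F ⋙ forgetF)
  κ :=
    { toFun := Tκfun F
      map_zero' := by
        show Tκfun F (0 : colimit (F ⋙ forgetF)) = 0
        rw [← ι_zero F (Classical.arbitrary J), Tκ_ι, map_zero, ι_zero]
      map_add' := fun x y => by
        obtain ⟨j, a, b, rfl, rfl⟩ := exists_rep₂ F x y
        show Tκfun F (colimit.ι (F ⋙ forgetF) j a + colimit.ι (F ⋙ forgetF) j b)
          = Tκfun F (colimit.ι (F ⋙ forgetF) j a) + Tκfun F (colimit.ι (F ⋙ forgetF) j b)
        rw [ι_add, Tκ_ι, Tκ_ι, Tκ_ι, map_add, ← ι_add] }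
  κ_smul r m := by
    obtain ⟨j, a, rfl⟩ := exists_rep F m
    show Tκfun F (r • colimit.ι (F ⋙ forgetF) j a)
      = r ^ p • Tκfun F (colimit.ι (F ⋙ forgetF) j a)
    rw [ι_smul, Tκ_ι, Tκ_ι, (F.obj j).κ_smul, ← ι_smul]

/-- The colimit cocone in `FrobModule`. -/
noncomputable def colCocone : Cocone F where
  pt := colPt F
  ι :=
    { app := fun j =>
        { toLinearMap :=
            { toFun := colimit.ι (F ⋙ forgetF) j
              map_add' := fun a b => (ι_add F j a b).symm
              map_smul' := fun r a => (ι_smul F r j a).symm }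
          comm := fun m => (Tκ_ι F j m).symm }
      naturality := fun {j k} f => by
        apply Hom.ext
        apply LinearMap.ext
        intro a
        exact ConcreteCategory.congr_hom (colimit.w (F ⋙ forgetF) f) a }

set_option maxHeartbeats 1000000 in
/-- The colimit cocone is a colimit. -/
noncomputable def colIsColimit : IsColimit (colCocone F) where
  desc s :=
    { toLinearMap :=
        { toFun := colimit.desc (F ⋙ forgetF) ((forgetF : FrobModule p R ⥤ Type u).mapCocone s)
          map_add' := fun x y => by
            obtain ⟨j, a, b, rfl, rfl⟩ := exists_rep₂ F x y
            have dι : ∀ (j : J) (a : (F.obj j).carrier),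
                colimit.desc (F ⋙ forgetF) ((forgetF : FrobModule p R ⥤ Type u).mapCocone s)
                  (colimit.ι (F ⋙ forgetF) j a) = (s.ι.app j).toLinearMap a :=
              fun j a => ConcreteCategory.congr_hom
                (colimit.ι_desc ((forgetF : FrobModule p R ⥤ Type u).mapCocone s) j) a
            erw [ι_add]
            rw [dι, dι, dι, map_add]
          map_smul' := fun r x => by
            obtain ⟨j, a, rfl⟩ := exists_rep F x
            have dι : ∀ (j : J) (a : (F.obj j).carrier),
                colimit.desc (F ⋙ forgetF) ((forgetF : FrobModule p R ⥤ Type u).mapCocone s)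
                  (colimit.ι (F ⋙ forgetF) j a) = (s.ι.app j).toLinearMap a :=
              fun j a => ConcreteCategory.congr_hom
                (colimit.ι_desc ((forgetF : FrobModule p R ⥤ Type u).mapCocone s) j) a
            have h1 : colimit.desc (F ⋙ forgetF)
                ((forgetF : FrobModule p R ⥤ Type u).mapCocone s)
                (r • colimit.ι (F ⋙ forgetF) j a) = (s.ι.app j).toLinearMap (r • a) := by
              rw [ι_smul]; exact dι j (r • a)
            have h2 : (s.ι.app j).toLinearMap (r • a)
                = r • ((s.ι.app j).toLinearMap a : s.pt.carrier) :=
              (s.ι.app j).toLinearMap.map_smul r a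
            exact h1.trans (h2.trans (congrArg (fun z => r • z) (dι j a).symm)) }
      comm := fun m => by
        obtain ⟨j, a, rfl⟩ := exists_rep F m
        have dι : ∀ (j : J) (a : (F.obj j).carrier),
            colimit.desc (F ⋙ forgetF) ((forgetF : FrobModule p R ⥤ Type u).mapCocone s)
              (colimit.ι (F ⋙ forgetF) j a) = (s.ι.app j).toLinearMap a :=
          fun j a => ConcreteCategory.congr_hom
            (colimit.ι_desc ((forgetF : FrobModule p R ⥤ Type u).mapCocone s) j) a
        have h1 : colimit.desc (F ⋙ forgetF)
            ((forgetF : FrobModule p R ⥤ Type u).mapCocone s)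
            (Tκfun F (colimit.ι (F ⋙ forgetF) j a))
            = (s.ι.app j).toLinearMap ((F.obj j).κ a) := by
          rw [Tκ_ι]; exact dι j ((F.obj j).κ a)
        have h2 : (s.ι.app j).toLinearMap ((F.obj j).κ a)
            = s.pt.κ ((s.ι.app j).toLinearMap a) := (s.ι.app j).comm a
        exact h1.trans (h2.trans (congrArg s.pt.κ (dι j a).symm)) }
  fac s j := by
    apply Hom.ext
    apply LinearMap.ext
    intro a
    exact ConcreteCategory.congr_hom (colimit.ι_desc ((forgetF : FrobModule p R ⥤ Type u).mapCocone s) j) a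
  uniq s m hm := by
    apply Hom.ext
    apply LinearMap.ext
    intro x
    obtain ⟨j, a, rfl⟩ := exists_rep F x
    have h1 : m.toLinearMap (colimit.ι (F ⋙ forgetF) j a) = (s.ι.app j).toLinearMap a :=
      congrArg (fun h => h.toLinearMap a) (hm j)
    exact h1.trans
      (ConcreteCategory.congr_hom (colimit.ι_desc ((forgetF : FrobModule p R ⥤ Type u).mapCocone s) j) a).symm

instance forgetF_preservesColimitsOfShape :
    PreservesColimitsOfShape J (forgetF : FrobModule p R ⥤ Type u) where
  preservesColimit {K} :=
    ⟨fun {c} hc =>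
      ⟨by
        have h₀ : IsColimit ((forgetF : FrobModule p R ⥤ Type u).mapCocone (colCocone K)) :=
          (colimit.isColimit (K ⋙ (forgetF : FrobModule p R ⥤ Type u))).ofIsoColimit
            (Cocones.ext (Iso.refl _) (fun j => Category.comp_id _))
        exact h₀.ofIsoColimit
          ((Cocones.functoriality K (forgetF : FrobModule p R ⥤ Type u)).mapIso
            ((colIsColimit K).uniqueUpToIso hc))⟩⟩

instance coyonedaP_preservesColimitsOfShape :
    PreservesColimitsOfShape J (coyoneda.obj (Opposite.op (P p R))) :=
  preservesColimitsOfShape_of_natIso (εIso p R)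

end Colimits

instance coyonedaP_reflectsIsomorphisms :
    (coyoneda.obj (Opposite.op (P p R))).ReflectsIsomorphisms where
  reflects {M N} f hf := by
    have hbij : Function.Bijective ((coyoneda.obj (Opposite.op (P p R))).map f) :=
      ((CategoryTheory.isIso_iff_bijective _).1 hf)
    have hb : Function.Bijective f.toLinearMap := by
      constructor
      · intro x x' h
        have h1 : ofElt M x ≫ f = ofElt M x' ≫ f := by
          rw [ofElt_comp, ofElt_comp, h]
        have h2 := hbij.1 h1
        have h3 := congrArg (fun g => g.toLinearMap (Finsupp.single 0 (1 : R))) h2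
        simpa only [ofElt_e₀] using h3
      · intro y
        obtain ⟨g, hg⟩ := hbij.2 (ofElt N y)
        refine ⟨g.toLinearMap (Finsupp.single 0 1), ?_⟩
        have := congrArg (fun h => h.toLinearMap (Finsupp.single 0 (1 : R))) hg
        exact this.trans (ofElt_e₀ N y)
    let e := LinearEquiv.ofBijective f.toLinearMap hb
    refine ⟨⟨⟨(e.symm : N.carrier →ₗ[R] M.carrier), fun n => ?_⟩, ?_, ?_⟩⟩
    · apply hb.1
      show f.toLinearMap (e.symm (N.κ n)) = f.toLinearMap (M.κ (e.symm n))
      have h4 : f.toLinearMap (e.symm (N.κ n)) = N.κ n := e.apply_symm_apply _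
      have h5 : f.toLinearMap (M.κ (e.symm n)) = N.κ (f.toLinearMap (e.symm n)) := f.comm _
      have h6 : f.toLinearMap (e.symm n) = n := e.apply_symm_apply n
      rw [h4, h5, h6]
    · exact Hom.ext (LinearMap.ext fun x => e.symm_apply_apply x)
    · exact Hom.ext (LinearMap.ext fun y => e.apply_symm_apply y)

end FrobModule

/-- `P` is a compact projective generator of `Frob_R`: its hom functor preserves
sifted colimits and reflects isomorphisms. -/
theorem P_compact_projective_generator :
    (∀ (J : Type u) [SmallCategory J] [CategoryTheory.IsSifted J],
      Limits.PreservesColimitsOfShape J (coyoneda.obj (Opposite.op (P p R)))) ∧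
    (coyoneda.obj (Opposite.op (P p R))).ReflectsIsomorphisms := by
  constructor
  · intro J _ _
    infer_instance
  · infer_instance
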